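/- For every λ ≥ 0 and every θ ∈ ℝ, with g₃²(θ) = (1/4)e^{iθ} + 5/6 − (3/2)e^{−iθ} + (1/2)e^{−2iθ} − (1/12)e^{−3iθ}, one has 1 + (λ/2)g₃²(θ) ≠ 0 and |(1 − (λ/2)g₃²(θ))/(1 + (λ/2)g₃²(θ))| ≤ 1. That is, the Crank–Nicolson time discretisation combined with the spatial operator δ₃² is unconditionally von Neumann stable. -/

import Mathlib

/-- Unconditional von Neumann stability of Crank–Nicolson with the spatial
operator `δ₃²`: for every `λ ≥ 0` and `θ`, with
`g₃²(θ) = (1/4)e^{iθ} + 5/6 - (3/2)e^{-iθ} + (1/2)e^{-2iθ} - (1/12)e^{-3iθ}`,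
one has `1 + (λ/2) g₃²(θ) ≠ 0` and `|(1 - (λ/2) g₃²(θ))/(1 + (λ/2) g₃²(θ))| ≤ 1`. -/
theorem stmt_17 (lam : ℝ) (hlam : 0 ≤ lam) (θ : ℝ) :
    1 + ((lam : ℂ) / 2) * ((1 / 4 : ℂ) * Complex.exp ((θ : ℂ) * Complex.I) + 5 / 6 -
        (3 / 2 : ℂ) * Complex.exp (-(θ : ℂ) * Complex.I) +
        (1 / 2 : ℂ) * Complex.exp (-2 * (θ : ℂ) * Complex.I) -
        (1 / 12 : ℂ) * Complex.exp (-3 * (θ : ℂ) * Complex.I)) ≠ 0 ∧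
      ‖
        ((1 - ((lam : ℂ) / 2) * ((1 / 4 : ℂ) * Complex.exp ((θ : ℂ) * Complex.I) + 5 / 6 -
            (3 / 2 : ℂ) * Complex.exp (-(θ : ℂ) * Complex.I) +
            (1 / 2 : ℂ) * Complex.exp (-2 * (θ : ℂ) * Complex.I) -
            (1 / 12 : ℂ) * Complex.exp (-3 * (θ : ℂ) * Complex.I))) /
          (1 + ((lam : ℂ) / 2) * ((1 / 4 : ℂ) * Complex.exp ((θ : ℂ) * Complex.I) + 5 / 6 -
            (3 / 2 : ℂ) * Complex.exp (-(θ : ℂ) * Complex.I) +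
            (1 / 2 : ℂ) * Complex.exp (-2 * (θ : ℂ) * Complex.I) -
            (1 / 12 : ℂ) * Complex.exp (-3 * (θ : ℂ) * Complex.I))))‖ ≤ 1 := by
  have e1 : -(θ:ℂ)*Complex.I = ((-θ : ℝ):ℂ)*Complex.I := by push_cast; ring
  have e2 : -2*(θ:ℂ)*Complex.I = ((-2*θ : ℝ):ℂ)*Complex.I := by push_cast; ring
  have e3 : -3*(θ:ℂ)*Complex.I = ((-3*θ : ℝ):ℂ)*Complex.I := by push_cast; ring
  rw [e1, e2, e3]
  set g : ℂ := (1 / 4 : ℂ) * Complex.exp ((θ : ℂ) * Complex.I) + 5 / 6 -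
      (3 / 2 : ℂ) * Complex.exp (((-θ : ℝ):ℂ) * Complex.I) +
      (1 / 2 : ℂ) * Complex.exp (((-2*θ : ℝ):ℂ) * Complex.I) -
      (1 / 12 : ℂ) * Complex.exp (((-3*θ : ℝ):ℂ) * Complex.I) with hg
  set z : ℂ := ((lam : ℂ) / 2) * g with hz
  have hgre : g.re = (1/3) * (1 - Real.cos θ)^3 := by
    have h2 := Real.cos_two_mul θ
    have h3 := Real.cos_three_mul θ
    simp only [hg, Complex.sub_re, Complex.add_re, Complex.mul_re,
      Complex.exp_ofReal_mul_I_re, Complex.exp_ofReal_mul_I_im,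
      Complex.ofReal_re, Complex.ofReal_im]
    norm_num [Real.cos_neg]
    rw [h2, h3]
    ring
  have hzre : 0 ≤ z.re := by
    have : z.re = (lam/2) * g.re := by
      simp [hz, Complex.mul_re, Complex.div_re]
    rw [this, hgre]
    have : (0:ℝ) ≤ (1 - Real.cos θ)^3 := by
      have := Real.cos_le_one θ
      exact pow_nonneg (by linarith) 3
    positivity
  have hne : 1 + z ≠ 0 := by
    intro h
    have : (1 + z).re = 0 := by rw [h]; simp
    simp [Complex.add_re] at this
    linarith
  refine ⟨hne, ?_⟩
  rw [norm_div]
  rw [div_le_one (norm_pos_iff.mpr hne)]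
  have hnormsq : Complex.normSq (1 - z) ≤ Complex.normSq (1 + z) := by
    simp only [Complex.normSq_apply, Complex.sub_re, Complex.sub_im,
      Complex.add_re, Complex.add_im, Complex.one_re, Complex.one_im]
    nlinarith
  have := Real.sqrt_le_sqrt hnormsq
  simpa [Complex.norm_def] using this
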